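/- Given a type A with a reflexive relational equivalence structure—i.e. a binary type-valued relation E : A → A → Type with a reflexivity term refl : ∀ a, E a a, such that for every a the type Σ (b : A), E a b is contractible and for every b the type Σ (a : A), E a b is contractible—and a type family P : A → Type with a dependent equivalence T : ∀ x y, E x y → (P x ≃ P y) (relational equivalences between fibers), one can construct a based path-induction (J) eliminator: for every a : A, motive Q : (y : A) → E a y → Type, and d : Q a (refl a), there exists j : ∀ y (p : E a y), Q y p together with a proof that j a (refl a) is related to d by the identity type of Q a (refl a). -/
import Mathlib


/-- Based path induction (a weak `J` eliminator) can be constructed from a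
reflexive relational equivalence structure together with dependent
equivalences: given a reflexive relation `E` on `A` whose total spaces in both
directions are contractible, and a family `P` with equivalences of fibers
`T x y : E x y → (P x ≃ P y)`, then for every `a`, motive `Q` and
`d : Q a (refl a)`, there is `j : ∀ y p, Q y p` with `j a (refl a)` identified
with `d`. -/
theorem J_from_reflexive_equivalence {A : Type u}
    (E : A → A → Type v) (refl : ∀ a : A, E a a)
    (hfunR : ∀ a : A, ∃ c : Σ b : A, E a b, ∀ z : Σ b : A, E a b, z = c)
    (hfunL : ∀ b : A, ∃ c : Σ a : A, E a b, ∀ z : Σ a : A, E a b, z = c)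
    (P : A → Type w) (T : ∀ x y : A, E x y → (P x ≃ P y))
    (a : A) (Q : ∀ y : A, E a y → Type z) (d : Q a (refl a)) :
    ∃ j : ∀ (y : A) (p : E a y), Q y p, j a (refl a) = d := by
  obtain ⟨c, hc⟩ := hfunR a
  have key : ∀ (y : A) (p : E a y),
      (⟨a, refl a⟩ : Σ b : A, E a b) = ⟨y, p⟩ :=
    fun y p => (hc ⟨a, refl a⟩).trans (hc ⟨y, p⟩).symm
  exact ⟨fun y p => (key y p).rec (motive := fun s _ => Q s.1 s.2) d, rfl⟩
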